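/- Assume ℓ is convex and differentiable in its first argument, and let D_f ⊆ D be nonempty. Then the gradient of the dual forget risk at Δα = 0 satisfies ∇_{Δα} L̃_{D_f}(0) = K_fᵀ · ∇_{f^lin(X_f, θ̂*)} L̂_{D_f} + λ K α*, where K_f := K(X_f, X), K := K(X, X), ∇_{f^lin(X_f, θ̂*)} L̂_{D_f} ∈ ℝ^{d_out·|D_f|} stacks (1/|D_f|)·∇_u ℓ(u, y) at u = f^lin(x, θ̂*) over (x,y) ∈ D_f, and α* := −(1/λ) ∇_{f^lin(X, θ̂*)} L̂_D ∈ ℝ^{d_out·n}. -/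

import Mathlib

open Finset Matrix

noncomputable section

/-- Squared ℓ₂ norm of a finitely-indexed real vector. -/
def sqnorm {ι : Type*} [Fintype ι] (v : ι → ℝ) : ℝ := ∑ i, v i ^ 2

/-- The linearized model `f^lin(x, θ) = f(x, θ') + J(x)(θ - θ')`, where `f0 x = f(x, θ')`
and `J x` is the Jacobian of `f(x, ·)` at `θ'`. -/
def flin {din dout dθ : ℕ}
    (f0 : (Fin din → ℝ) → Fin dout → ℝ)
    (J : (Fin din → ℝ) → Matrix (Fin dout) (Fin dθ) ℝ)
    (θ' : Fin dθ → ℝ) (xt : Fin din → ℝ) (θ : Fin dθ → ℝ) : Fin dout → ℝ :=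
  f0 xt + J xt *ᵥ (θ - θ')

/-- Regularized empirical risk `L̂_S(θ)` of the linearized model over the subset of the
dataset indexed by `S`. -/
def empRisk {din dout dθ n : ℕ}
    (f0 : (Fin din → ℝ) → Fin dout → ℝ)
    (J : (Fin din → ℝ) → Matrix (Fin dout) (Fin dθ) ℝ)
    (θ' : Fin dθ → ℝ) (X : Fin n → Fin din → ℝ) (Y : Fin n → Fin dout → ℝ)
    (ℓ : (Fin dout → ℝ) → (Fin dout → ℝ) → ℝ) (lam : ℝ)
    (S : Finset (Fin n)) (θ : Fin dθ → ℝ) : ℝ :=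
  (S.card : ℝ)⁻¹ * ∑ i ∈ S, (ℓ (flin f0 J θ' (X i) θ) (Y i) + lam / 2 * sqnorm (θ - θ'))

/-- Gradient of the loss `ℓ(·, y)` in its first argument, as a vector. -/
def gradloss {dout : ℕ} (ℓ : (Fin dout → ℝ) → (Fin dout → ℝ) → ℝ)
    (ytgt u : Fin dout → ℝ) : Fin dout → ℝ :=
  fun a => fderiv ℝ (fun v => ℓ v ytgt) u (Pi.single a 1)

/-- Hessian of the loss `ℓ(·, y)` in its first argument, as a matrix. -/
def hessloss {dout : ℕ} (ℓ : (Fin dout → ℝ) → (Fin dout → ℝ) → ℝ)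
    (ytgt u : Fin dout → ℝ) : Fin dout → Fin dout → ℝ :=
  fun a b => fderiv ℝ (fun v => fderiv ℝ (fun w => ℓ w ytgt) v (Pi.single b 1)) u (Pi.single a 1)

/-- Stacked Jacobian `J(X) ∈ ℝ^{d_out·n × d_θ}`, whose `i`-th row block is `J(x_i)`. -/
def JX {din dout dθ n : ℕ}
    (J : (Fin din → ℝ) → Matrix (Fin dout) (Fin dθ) ℝ)
    (X : Fin n → Fin din → ℝ) : Matrix (Fin n × Fin dout) (Fin dθ) ℝ :=
  fun q p => J (X q.1) q.2 p

/-- Empirical NTK Gram matrix `K = K(X, X) = J(X) J(X)ᵀ`. -/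
def Kmat {din dout dθ n : ℕ}
    (J : (Fin din → ℝ) → Matrix (Fin dout) (Fin dθ) ℝ)
    (X : Fin n → Fin din → ℝ) : Matrix (Fin n × Fin dout) (Fin n × Fin dout) ℝ :=
  JX J X * (JX J X)ᵀ

/-- NTK row block `K(x, X) = J(x) J(X)ᵀ ∈ ℝ^{d_out × d_out·n}`. -/
def KxX {din dout dθ n : ℕ}
    (J : (Fin din → ℝ) → Matrix (Fin dout) (Fin dθ) ℝ)
    (X : Fin n → Fin din → ℝ) (xt : Fin din → ℝ) : Matrix (Fin dout) (Fin n × Fin dout) ℝ :=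
  J xt * (JX J X)ᵀ

/-- Reparameterization `φ(Δα) = θ̂* + J(X)ᵀ Δα`. -/
def phi {din dout dθ n : ℕ}
    (J : (Fin din → ℝ) → Matrix (Fin dout) (Fin dθ) ℝ)
    (X : Fin n → Fin din → ℝ) (θstar : Fin dθ → ℝ)
    (Δα : Fin n × Fin dout → ℝ) : Fin dθ → ℝ :=
  θstar + (JX J X)ᵀ *ᵥ Δα

/-- Reparameterized model `g^lin(x, Δα) = f^lin(x, θ̂*) + K(x, X) Δα`. -/
def glin {din dout dθ n : ℕ}
    (f0 : (Fin din → ℝ) → Fin dout → ℝ)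
    (J : (Fin din → ℝ) → Matrix (Fin dout) (Fin dθ) ℝ)
    (θ' : Fin dθ → ℝ) (X : Fin n → Fin din → ℝ) (θstar : Fin dθ → ℝ)
    (xt : Fin din → ℝ) (Δα : Fin n × Fin dout → ℝ) : Fin dout → ℝ :=
  flin f0 J θ' xt θstar + KxX J X xt *ᵥ Δα

/-- Dual risk `L̃_S(Δα) = (1/|S|) Σ_{(x,y)∈S} ( ℓ(g^lin(x, Δα), y) + (λ/2)‖φ(Δα) − θ'‖₂² )`. -/
def dualRisk {din dout dθ n : ℕ}
    (f0 : (Fin din → ℝ) → Fin dout → ℝ)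
    (J : (Fin din → ℝ) → Matrix (Fin dout) (Fin dθ) ℝ)
    (θ' : Fin dθ → ℝ) (X : Fin n → Fin din → ℝ) (Y : Fin n → Fin dout → ℝ)
    (ℓ : (Fin dout → ℝ) → (Fin dout → ℝ) → ℝ) (lam : ℝ) (θstar : Fin dθ → ℝ)
    (S : Finset (Fin n)) (Δα : Fin n × Fin dout → ℝ) : ℝ :=
  (S.card : ℝ)⁻¹ *
    ∑ i ∈ S, (ℓ (glin f0 J θ' X θstar (X i) Δα) (Y i) +
      lam / 2 * sqnorm (phi J X θstar Δα - θ'))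

/-- The dual coefficient vector `Δα_r*` of Proposition 3.1: on the forget indices
(`q.1 ∉ Dr`) it is `(1/λ) ∇_{f^lin(X_f, θ̂*)} L̂_D`, and on the retain indices (`q.1 ∈ Dr`)
it is `−(1/λ)( ∇_{f^lin(X_r, θ̂_r*)} L̂_{D_r} − ∇_{f^lin(X_r, θ̂*)} L̂_D )`. -/
def dalpha {din dout dθ n : ℕ}
    (f0 : (Fin din → ℝ) → Fin dout → ℝ)
    (J : (Fin din → ℝ) → Matrix (Fin dout) (Fin dθ) ℝ)
    (θ' : Fin dθ → ℝ) (X : Fin n → Fin din → ℝ) (Y : Fin n → Fin dout → ℝ)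
    (ℓ : (Fin dout → ℝ) → (Fin dout → ℝ) → ℝ) (lam : ℝ)
    (Dr : Finset (Fin n)) (θstar θrstar : Fin dθ → ℝ) :
    Fin n × Fin dout → ℝ :=
  fun q =>
    if q.1 ∈ Dr then
      -lam⁻¹ * ((Dr.card : ℝ)⁻¹ * gradloss ℓ (Y q.1) (flin f0 J θ' (X q.1) θrstar) q.2
        - (n : ℝ)⁻¹ * gradloss ℓ (Y q.1) (flin f0 J θ' (X q.1) θstar) q.2)
    else
      lam⁻¹ * ((n : ℝ)⁻¹ * gradloss ℓ (Y q.1) (flin f0 J θ' (X q.1) θstar) q.2)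

def mvCLM {m k : Type*} [Fintype m] [Fintype k] (M : Matrix m k ℝ) :
    (k → ℝ) →L[ℝ] (m → ℝ) :=
  LinearMap.toContinuousLinearMap M.mulVecLin

@[simp] lemma mvCLM_apply {m k : Type*} [Fintype m] [Fintype k] (M : Matrix m k ℝ)
    (v : k → ℝ) : mvCLM M v = M *ᵥ v := rfl

def sqD {ι : Type*} [Fintype ι] (w : ι → ℝ) : (ι → ℝ) →L[ℝ] ℝ :=
  ∑ i, (2 * w i) • (ContinuousLinearMap.proj i : ((ι → ℝ) →L[ℝ] ℝ))

lemma sqD_apply {ι : Type*} [Fintype ι] (w h : ι → ℝ) :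
    sqD w h = ∑ i, 2 * w i * h i := by
  simp [sqD, ContinuousLinearMap.sum_apply, mul_comm]

lemma hasFDerivAt_sqnorm {ι : Type*} [Fintype ι] (w : ι → ℝ) :
    HasFDerivAt sqnorm (sqD w) w := by
  have : HasFDerivAt (fun v : ι → ℝ => ∑ i, v i ^ 2)
      (∑ i : ι, (2 * w i) • (ContinuousLinearMap.proj i : ((ι → ℝ) →L[ℝ] ℝ))) w := by
    apply HasFDerivAt.fun_sum
    intro i _
    have h1 : HasFDerivAt (fun v : ι → ℝ => v i)
        (ContinuousLinearMap.proj i : ((ι → ℝ) →L[ℝ] ℝ)) w :=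
      hasFDerivAt_apply i w
    have h2 := h1.mul h1
    have h3 : (2 * w i) • (ContinuousLinearMap.proj i : ((ι → ℝ) →L[ℝ] ℝ))
        = w i • (ContinuousLinearMap.proj i : ((ι → ℝ) →L[ℝ] ℝ))
          + w i • (ContinuousLinearMap.proj i : ((ι → ℝ) →L[ℝ] ℝ)) := by
      rw [two_mul, add_smul]
    rw [h3]
    simpa [pow_two, Pi.mul_def] using h2
  exact this

lemma clm_eval_sum {dout : ℕ} (L : (Fin dout → ℝ) →L[ℝ] ℝ) (w : Fin dout → ℝ) :
    L w = ∑ a, w a * L (Pi.single a 1) := by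
  have hw : w = ∑ a, (w a) • (Pi.single a 1 : Fin dout → ℝ) := by
    ext b
    simp [Pi.single_apply, Finset.sum_ite_eq', mul_comm]
  conv_lhs => rw [hw]
  simp [mul_comm]

lemma mulVec_single_one' {m k : Type*} [Fintype k] [DecidableEq k]
    (M : Matrix m k ℝ) (j : k) : M *ᵥ Pi.single j 1 = fun i => M i j := by
  ext i
  simp [Matrix.mulVec, dotProduct, Pi.single_apply, mul_ite, Finset.sum_ite_eq']


/-- gradient of the dual forget risk at `Δα = 0`:
`∇_{Δα} L̃_{D_f}(0) = K_fᵀ ∇_{f^lin(X_f, θ̂*)} L̂_{D_f} + λ K α*`, with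
`α* = −(1/λ) ∇_{f^lin(X, θ̂*)} L̂_D`. -/
theorem stmt_12 {din dout dθ n : ℕ} (hn : 0 < n)
    (f0 : (Fin din → ℝ) → Fin dout → ℝ)
    (J : (Fin din → ℝ) → Matrix (Fin dout) (Fin dθ) ℝ)
    (θ' : Fin dθ → ℝ) (X : Fin n → Fin din → ℝ) (Y : Fin n → Fin dout → ℝ)
    (ℓ : (Fin dout → ℝ) → (Fin dout → ℝ) → ℝ) (lam : ℝ)
    (hℓ0 : ∀ u ytgt, 0 ≤ ℓ u ytgt)
    (hconv : ∀ ytgt, ConvexOn ℝ Set.univ fun u => ℓ u ytgt)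
    (hdiff : ∀ ytgt, Differentiable ℝ fun u => ℓ u ytgt)
    (hlam : 0 < lam)
    (θstar : Fin dθ → ℝ)
    (hmin : ∀ θ : Fin dθ → ℝ,
      empRisk f0 J θ' X Y ℓ lam Finset.univ θstar ≤ empRisk f0 J θ' X Y ℓ lam Finset.univ θ)
    (Df : Finset (Fin n)) (hDf : Df.Nonempty) :
    (fun q : Fin n × Fin dout =>
        fderiv ℝ (dualRisk f0 J θ' X Y ℓ lam θstar Df)
          (0 : Fin n × Fin dout → ℝ) (Pi.single q 1)) =
      fun q : Fin n × Fin dout =>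
        (∑ i ∈ Df, ∑ a : Fin dout,
            Kmat J X (i, a) q *
              ((Df.card : ℝ)⁻¹ * gradloss ℓ (Y i) (flin f0 J θ' (X i) θstar) a))
        + lam * (Kmat J X *ᵥ (fun r : Fin n × Fin dout =>
            -lam⁻¹ * ((n : ℝ)⁻¹ * gradloss ℓ (Y r.1) (flin f0 J θ' (X r.1) θstar) r.2))) q := by
    classical
  have hn' : (n : ℝ) ≠ 0 := Nat.cast_ne_zero.mpr hn.ne'
  have hDf' : (Df.card : ℝ) ≠ 0 := Nat.cast_ne_zero.mpr hDf.card_ne_zero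
  have hlam' : lam ≠ 0 := hlam.ne'
  -- derivative of θ ↦ flin x θ
  have hflin : ∀ i : Fin n,
      HasFDerivAt (fun θ => flin f0 J θ' (X i) θ) (mvCLM (J (X i))) θstar := by
    intro i
    have h1 : HasFDerivAt (fun θ : Fin dθ → ℝ => θ - θ')
        (ContinuousLinearMap.id ℝ (Fin dθ → ℝ)) θstar := (hasFDerivAt_id θstar).sub_const θ'
    have h2 := ((mvCLM (J (X i))).hasFDerivAt.comp θstar h1).const_add (f0 (X i))
    simpa [flin, Function.comp] using h2
  have hLclm : ∀ i : Fin n, HasFDerivAt (fun θ => ℓ (flin f0 J θ' (X i) θ) (Y i))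
      ((fderiv ℝ (fun v => ℓ v (Y i)) (flin f0 J θ' (X i) θstar)).comp (mvCLM (J (X i))))
      θstar := fun i =>
    (((hdiff (Y i)) (flin f0 J θ' (X i) θstar)).hasFDerivAt).comp θstar (hflin i)
  have hsq : HasFDerivAt (fun θ : Fin dθ → ℝ => sqnorm (θ - θ')) (sqD (θstar - θ')) θstar := by
    have h1 : HasFDerivAt (fun θ : Fin dθ → ℝ => θ - θ')
        (ContinuousLinearMap.id ℝ (Fin dθ → ℝ)) θstar := (hasFDerivAt_id θstar).sub_const θ'
    simpa [Function.comp_def] using (hasFDerivAt_sqnorm (θstar - θ')).comp θstar h1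
  -- empirical risk derivative
  have hemp : HasFDerivAt (empRisk f0 J θ' X Y ℓ lam Finset.univ)
      ((n : ℝ)⁻¹ • ∑ i : Fin n,
        ((fderiv ℝ (fun v => ℓ v (Y i)) (flin f0 J θ' (X i) θstar)).comp (mvCLM (J (X i)))
          + (lam / 2) • sqD (θstar - θ'))) θstar := by
    have hsum : HasFDerivAt
        (fun θ => ∑ i : Fin n, (ℓ (flin f0 J θ' (X i) θ) (Y i) + lam / 2 * sqnorm (θ - θ')))
        (∑ i : Fin n, ((fderiv ℝ (fun v => ℓ v (Y i)) (flin f0 J θ' (X i) θstar)).comp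
            (mvCLM (J (X i))) + (lam / 2) • sqD (θstar - θ'))) θstar :=
      HasFDerivAt.fun_sum fun i _ => (hLclm i).add (hsq.const_mul (lam / 2))
    have h2 := hsum.const_mul ((n : ℝ)⁻¹)
    have heq : empRisk f0 J θ' X Y ℓ lam Finset.univ = fun θ =>
        (n : ℝ)⁻¹ * ∑ i : Fin n, (ℓ (flin f0 J θ' (X i) θ) (Y i)
          + lam / 2 * sqnorm (θ - θ')) := by
      funext θ
      simp [empRisk, Finset.card_univ]
    rw [heq]
    exact h2
  have hfociszero : ((n : ℝ)⁻¹ • ∑ i : Fin n,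
      ((fderiv ℝ (fun v => ℓ v (Y i)) (flin f0 J θ' (X i) θstar)).comp (mvCLM (J (X i)))
        + (lam / 2) • sqD (θstar - θ'))) = 0 := by
    have hloc : IsLocalMin (empRisk f0 J θ' X Y ℓ lam Finset.univ) θstar :=
      Filter.Eventually.of_forall hmin
    have h0 := hloc.fderiv_eq_zero
    rw [hemp.fderiv] at h0
    exact h0
  have hfoc : ∀ w : Fin dθ → ℝ,
      (n : ℝ)⁻¹ * ∑ i : Fin n,
        (fderiv ℝ (fun v => ℓ v (Y i)) (flin f0 J θ' (X i) θstar) (J (X i) *ᵥ w)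
          + lam / 2 * sqD (θstar - θ') w) = 0 := by
    intro w
    have := congrArg (fun L : (Fin dθ → ℝ) →L[ℝ] ℝ => L w) hfociszero
    simpa [ContinuousLinearMap.sum_apply, smul_eq_mul] using this
  -- dual risk derivative at 0
  have hglin : ∀ i : Fin n, HasFDerivAt (fun Δα => glin f0 J θ' X θstar (X i) Δα)
      (mvCLM (KxX J X (X i))) (0 : Fin n × Fin dout → ℝ) := by
    intro i
    have h2 := ((mvCLM (KxX J X (X i))).hasFDerivAt
      (x := (0 : Fin n × Fin dout → ℝ))).const_add (flin f0 J θ' (X i) θstar)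
    simpa [glin] using h2
  have hglin0 : ∀ i : Fin n, glin f0 J θ' X θstar (X i) 0 = flin f0 J θ' (X i) θstar := by
    intro i; simp [glin]
  have hℓd : ∀ i : Fin n, HasFDerivAt (fun Δα => ℓ (glin f0 J θ' X θstar (X i) Δα) (Y i))
      ((fderiv ℝ (fun v => ℓ v (Y i)) (flin f0 J θ' (X i) θstar)).comp
        (mvCLM (KxX J X (X i)))) (0 : Fin n × Fin dout → ℝ) := by
    intro i
    have h1 := (((hdiff (Y i)) (glin f0 J θ' X θstar (X i) 0)).hasFDerivAt).comp
      (0 : Fin n × Fin dout → ℝ) (hglin i)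
    rw [hglin0 i] at h1
    exact h1
  have hsqd : HasFDerivAt (fun Δα => sqnorm (phi J X θstar Δα - θ'))
      ((sqD (θstar - θ')).comp (mvCLM (JX J X)ᵀ)) (0 : Fin n × Fin dout → ℝ) := by
    have hφ : HasFDerivAt (fun Δα : Fin n × Fin dout → ℝ => phi J X θstar Δα - θ')
        (mvCLM (JX J X)ᵀ) 0 := by
      have h2 := (((mvCLM (JX J X)ᵀ).hasFDerivAt
        (x := (0 : Fin n × Fin dout → ℝ))).const_add θstar).sub_const θ'
      simpa [phi] using h2
    have hval : phi J X θstar 0 - θ' = θstar - θ' := by simp [phi]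
    have h3 := (hasFDerivAt_sqnorm (phi J X θstar 0 - θ')).comp
      (0 : Fin n × Fin dout → ℝ) hφ
    rwa [hval] at h3
  have hdual : HasFDerivAt (dualRisk f0 J θ' X Y ℓ lam θstar Df)
      ((Df.card : ℝ)⁻¹ • ∑ i ∈ Df,
        ((fderiv ℝ (fun v => ℓ v (Y i)) (flin f0 J θ' (X i) θstar)).comp
            (mvCLM (KxX J X (X i)))
          + (lam / 2) • (sqD (θstar - θ')).comp (mvCLM (JX J X)ᵀ)))
      (0 : Fin n × Fin dout → ℝ) := by
    have hsum : HasFDerivAt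
        (fun Δα => ∑ i ∈ Df, (ℓ (glin f0 J θ' X θstar (X i) Δα) (Y i)
          + lam / 2 * sqnorm (phi J X θstar Δα - θ')))
        (∑ i ∈ Df, ((fderiv ℝ (fun v => ℓ v (Y i)) (flin f0 J θ' (X i) θstar)).comp
            (mvCLM (KxX J X (X i)))
          + (lam / 2) • (sqD (θstar - θ')).comp (mvCLM (JX J X)ᵀ)))
        (0 : Fin n × Fin dout → ℝ) :=
      HasFDerivAt.fun_sum fun i _ => (hℓd i).add (hsqd.const_mul (lam / 2))
    have h2 := hsum.const_mul ((Df.card : ℝ)⁻¹)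
    have heq : dualRisk f0 J θ' X Y ℓ lam θstar Df = fun Δα =>
        (Df.card : ℝ)⁻¹ * ∑ i ∈ Df, (ℓ (glin f0 J θ' X θstar (X i) Δα) (Y i)
          + lam / 2 * sqnorm (phi J X θstar Δα - θ')) := by
      funext Δα
      simp [dualRisk]
    rw [heq]
    exact h2
  -- now compute pointwise
  funext q
  rw [hdual.fderiv]
  set w : Fin dθ → ℝ := fun p => JX J X q p with hw
  have hsingle : (JX J X)ᵀ *ᵥ Pi.single q 1 = w := by
    rw [mulVec_single_one']; rfl
  have hKx : ∀ i : Fin n, KxX J X (X i) *ᵥ Pi.single q 1 = fun a => Kmat J X (i, a) q := by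
    intro i
    rw [mulVec_single_one']
    funext a
    simp [KxX, Kmat, JX, Matrix.mul_apply]
  have hJw : ∀ i : Fin n, J (X i) *ᵥ w = fun a => Kmat J X (i, a) q := by
    intro i
    funext a
    simp [Matrix.mulVec, dotProduct, hw, Kmat, JX, Matrix.mul_apply]
  have hgradsum : ∀ (i : Fin n) (v : Fin dout → ℝ),
      fderiv ℝ (fun x => ℓ x (Y i)) (flin f0 J θ' (X i) θstar) v
        = ∑ a, v a * gradloss ℓ (Y i) (flin f0 J θ' (X i) θstar) a := by
    intro i v
    rw [clm_eval_sum]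
    rfl
  set T : ℝ := sqD (θstar - θ') w with hT
  set C : Fin n → ℝ := fun i =>
    ∑ a, Kmat J X (i, a) q * gradloss ℓ (Y i) (flin f0 J θ' (X i) θstar) a with hC
  have hCi : ∀ i : Fin n,
      fderiv ℝ (fun x => ℓ x (Y i)) (flin f0 J θ' (X i) θstar) (J (X i) *ᵥ w) = C i := by
    intro i
    rw [hJw i, hgradsum i]
  have hfocq : lam / 2 * T = -((n : ℝ)⁻¹ * ∑ i : Fin n, C i) := by
    have h0 := hfoc w
    rw [Finset.sum_congr rfl (fun i _ => by rw [hCi i])] at h0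
    rw [Finset.sum_add_distrib, Finset.sum_const, Finset.card_univ, Fintype.card_fin,
      nsmul_eq_mul] at h0
    have h1 : (∑ i : Fin n, C i) + (n : ℝ) * (lam / 2 * T) = 0 := by
      have h2 := congrArg (fun t => (n : ℝ) * t) h0
      simpa [← mul_assoc, mul_inv_cancel₀ hn'] using h2
    have h3 : (n : ℝ) * (lam / 2 * T) = -(∑ i : Fin n, C i) := by linarith
    field_simp
    linarith [h3]
  -- evaluate the LHS
  have hLHS : ((Df.card : ℝ)⁻¹ • ∑ i ∈ Df,
        ((fderiv ℝ (fun v => ℓ v (Y i)) (flin f0 J θ' (X i) θstar)).comp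
            (mvCLM (KxX J X (X i)))
          + (lam / 2) • (sqD (θstar - θ')).comp (mvCLM (JX J X)ᵀ)))
        (Pi.single q 1)
      = (Df.card : ℝ)⁻¹ * ∑ i ∈ Df, (C i + lam / 2 * T) := by
    simp only [ContinuousLinearMap.coe_smul', Pi.smul_apply, ContinuousLinearMap.sum_apply,
      ContinuousLinearMap.add_apply, ContinuousLinearMap.coe_comp', Function.comp_apply,
      ContinuousLinearMap.smul_apply, mvCLM_apply, smul_eq_mul]
    congr 1
    refine Finset.sum_congr rfl fun i _ => ?_
    rw [hsingle, hKx i, hgradsum i]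
  rw [hLHS]
  have hsplit : (Df.card : ℝ)⁻¹ * ∑ i ∈ Df, (C i + lam / 2 * T)
      = (Df.card : ℝ)⁻¹ * (∑ i ∈ Df, C i) + lam / 2 * T := by
    rw [Finset.sum_add_distrib, Finset.sum_const, nsmul_eq_mul, mul_add, ← mul_assoc,
      inv_mul_cancel₀ hDf', one_mul]
  rw [hsplit, hfocq]
  have hKsymm : ∀ r : Fin n × Fin dout, Kmat J X q r = Kmat J X r q := by
    intro r
    simp [Kmat, Matrix.mul_apply, JX, Matrix.transpose_apply, mul_comm]
  congr 1
  · rw [Finset.mul_sum]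
    refine Finset.sum_congr rfl fun i _ => ?_
    simp only [hC]
    rw [Finset.mul_sum]
    refine Finset.sum_congr rfl fun a _ => ?_
    ring
  · have hRHS : ∀ r : Fin n × Fin dout,
        lam * (Kmat J X q r *
          (-lam⁻¹ * ((n : ℝ)⁻¹ * gradloss ℓ (Y r.1) (flin f0 J θ' (X r.1) θstar) r.2)))
        = -((n : ℝ)⁻¹ * (Kmat J X r q
            * gradloss ℓ (Y r.1) (flin f0 J θ' (X r.1) θstar) r.2)) := by
      intro r
      rw [hKsymm r]
      field_simp
    have hmv : (Kmat J X *ᵥ (fun r : Fin n × Fin dout =>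
          -lam⁻¹ * ((n : ℝ)⁻¹ * gradloss ℓ (Y r.1) (flin f0 J θ' (X r.1) θstar) r.2))) q
        = ∑ r : Fin n × Fin dout, Kmat J X q r *
            (-lam⁻¹ * ((n : ℝ)⁻¹ * gradloss ℓ (Y r.1) (flin f0 J θ' (X r.1) θstar) r.2)) := rfl
    rw [hmv]
    conv_rhs => rw [Finset.mul_sum]
    have hfin : ∑ r : Fin n × Fin dout, lam * (Kmat J X q r *
          (-lam⁻¹ * ((n : ℝ)⁻¹ * gradloss ℓ (Y r.1) (flin f0 J θ' (X r.1) θstar) r.2)))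
        = -((n : ℝ)⁻¹ * ∑ i : Fin n, C i) := by
      rw [Finset.sum_congr rfl fun r _ => hRHS r]
      rw [Fintype.sum_prod_type]
      simp only [hC]
      rw [Finset.mul_sum, ← Finset.sum_neg_distrib]
      refine Finset.sum_congr rfl fun i _ => ?_
      rw [Finset.mul_sum, ← Finset.sum_neg_distrib]
    rw [hfin]
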